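/- Let q be a prime power and D ≥ 1. There exist pairwise coprime polynomials a, b, c ∈ F_q[t] with c irreducible of degree D, deg(a) ≤ D, deg(b) = D, the maximum of the three degrees achieved at least twice, and such that the image of -a·b^{-1} in (F_q[t]/(c))^* is a multiplicative generator. -/

import Mathlib

open Polynomial

noncomputable section SmythAux

variable (F : Type*) [Field F] [Fintype F]

lemma smyth_exists_irreducible_monic (D : ℕ) (hD : 1 ≤ D) :
    ∃ c : Polynomial F, Irreducible c ∧ c.Monic ∧ c.natDegree = D := by
  classical
  obtain ⟨p, hcharp⟩ := CharP.exists F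
  obtain ⟨m, hp, hcard⟩ := FiniteField.card F p
  haveI : Fact p.Prime := ⟨hp⟩
  have hp1 : 1 < p := hp.one_lt
  obtain ⟨n, hn0, hpn⟩ : ∃ n : ℕ, n ≠ 0 ∧ p ^ n = Fintype.card F ^ D :=
    ⟨(m : ℕ) * D, Nat.mul_ne_zero m.pos.ne' (by omega), by rw [hcard, ← pow_mul]⟩
  set g : Polynomial F := X ^ p ^ n - X with hg
  set K := SplittingField g with hK
  haveI : CharP K p := (Algebra.charP_iff F K p).mp hcharp
  haveI : FiniteDimensional F K := by dsimp only [K]; infer_instance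
  haveI : Finite K := Module.finite_of_finite F
  haveI : Fintype K := Fintype.ofFinite K
  have aux : g ≠ 0 := FiniteField.X_pow_card_pow_sub_X_ne_zero _ hn0 hp1
  have hsep : g.Separable := galois_poly_separable p (p ^ n) (dvd_pow_self p hn0)
  have key : Fintype.card (g.rootSet K) = g.natDegree :=
    card_rootSet_eq_natDegree hsep (SplittingField.splits g)
  have nat_degree_eq : g.natDegree = p ^ n :=
    FiniteField.X_pow_card_pow_sub_X_natDegree_eq _ hn0 hp1
  rw [nat_degree_eq] at key
  have huniv : g.rootSet K = Set.univ := by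
    rw [Set.eq_univ_iff_forall]
    suffices h : ∀ (x) (_ : x ∈ (⊤ : Subalgebra F K)),
        x ∈ g.rootSet K by simpa using h
    rw [← SplittingField.adjoin_rootSet]
    simp_rw [Algebra.mem_adjoin_iff]
    intro x hx
    refine Subring.closure_induction ?_ ?_ ?_ ?_ ?_ ?_ hx <;> simp_rw [mem_rootSet_of_ne aux]
    · rintro x (⟨r, rfl⟩ | hx)
      · simp only [g, map_sub, map_pow, aeval_X]
        have hr : r ^ p ^ n = r := by rw [hpn]; exact FiniteField.pow_card_pow D r
        rw [← map_pow, hr, sub_self]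
      · rwa [mem_rootSet_of_ne aux] at hx
    · rw [← coeff_zero_eq_aeval_zero']
      simp only [g, coeff_X_pow, coeff_X_zero, sub_zero, _root_.map_eq_zero, ite_eq_right_iff,
        one_ne_zero, coeff_sub]
      intro hzero
      exact Nat.not_lt_zero 1 (eq_zero_of_pow_eq_zero hzero.symm ▸ hp1)
    · simp [g]
    · simp only [g, aeval_X_pow, aeval_X, map_sub, add_pow_char_pow, sub_eq_zero]
      intro x y _ _ hx hy
      rw [hx, hy]
    · intro x _ hx
      simp only [g, sub_eq_zero, aeval_X_pow, aeval_X, map_sub, sub_neg_eq_add] at *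
      rw [neg_pow, hx, neg_one_pow_char_pow]
      ring
    · simp only [g, aeval_X_pow, aeval_X, map_sub, mul_pow, sub_eq_zero]
      intro x y _ _ hx hy
      rw [hx, hy]
  have hcardK : Fintype.card K = Fintype.card F ^ D := by
    simp_rw [huniv, ← Fintype.ofEquiv_card (Equiv.Set.univ _)] at key
    rw [← hpn]
    convert key using 2
  have hfinrank : Module.finrank F K = D := by
    have h2 : Fintype.card K = Fintype.card F ^ Module.finrank F K :=
      Module.card_eq_pow_finrank
    rw [hcardK] at h2
    exact (Nat.pow_right_injective Fintype.one_lt_card h2).symm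
  obtain ⟨α, hα⟩ := Field.exists_primitive_element_of_finite_top F K
  refine ⟨minpoly F α, minpoly.irreducible (IsIntegral.of_finite F α),
    minpoly.monic (IsIntegral.of_finite F α), ?_⟩
  rw [(Field.primitive_element_iff_minpoly_natDegree_eq F α).mp hα, hfinrank]

end SmythAux

theorem exists_worst_smyth_triple (F : Type*) [Field F] [Fintype F] (D : ℕ) (hD : 1 ≤ D) :
    ∃ a b c : Polynomial F,
      IsCoprime a b ∧ IsCoprime a c ∧ IsCoprime b c ∧
      Irreducible c ∧ c.natDegree = D ∧
      a.degree ≤ (D : WithBot ℕ) ∧ b.degree = (D : WithBot ℕ) ∧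
      (∃ i j : Fin 3, i ≠ j ∧
        (![a, b, c] i).degree = max a.degree (max b.degree c.degree) ∧
        (![a, b, c] j).degree = max a.degree (max b.degree c.degree)) ∧
      ∃ u : (Polynomial F ⧸ Ideal.span {c})ˣ,
        (u : Polynomial F ⧸ Ideal.span {c}) * Ideal.Quotient.mk (Ideal.span {c}) b =
          Ideal.Quotient.mk (Ideal.span {c}) (-a) ∧ Subgroup.zpowers u = ⊤ := by
  classical
  obtain ⟨c, hcirr, hcmonic, hcdeg⟩ := smyth_exists_irreducible_monic F D hD
  have hc0 : c ≠ 0 := hcmonic.ne_zero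
  have hcdegD : c.degree = (D : WithBot ℕ) := by
    rw [degree_eq_natDegree hc0, hcdeg]
  haveI hmax : (Ideal.span {c}).IsMaximal :=
    PrincipalIdealRing.isMaximal_of_irreducible hcirr
  letI : Field (Polynomial F ⧸ Ideal.span {c}) := Ideal.Quotient.field _
  haveI : Module.Finite F (Polynomial F ⧸ Ideal.span {c}) :=
    Module.Finite.of_basis (AdjoinRoot.powerBasis' hcmonic).basis
  haveI : Finite (Polynomial F ⧸ Ideal.span {c}) := Module.finite_of_finite F
  obtain ⟨g, hg⟩ := IsCyclic.exists_generator (α := (Polynomial F ⧸ Ideal.span {c})ˣ)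
  -- pick a representative of -g of degree < D
  obtain ⟨b₀', hb₀'⟩ := Ideal.Quotient.mk_surjective (I := Ideal.span {c})
    (-(g : Polynomial F ⧸ Ideal.span {c}))
  set b₀ : Polynomial F := b₀' %ₘ c with hb₀
  have hb₀deg : b₀.degree < c.degree := degree_modByMonic_lt b₀' hcmonic
  have hb₀mk : Ideal.Quotient.mk (Ideal.span {c}) b₀ = -(g : Polynomial F ⧸ Ideal.span {c}) := by
    rw [← hb₀', hb₀]
    conv_rhs => rw [← modByMonic_add_div b₀' c]
    rw [map_add, map_mul, Ideal.Quotient.eq_zero_iff_mem.mpr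
      (Ideal.subset_span (Set.mem_singleton c)), zero_mul, add_zero]
  set b : Polynomial F := c + b₀ with hb
  have hbdeg : b.degree = (D : WithBot ℕ) := by
    rw [hb, add_comm, degree_add_eq_right_of_degree_lt hb₀deg, hcdegD]
  have hbmk : Ideal.Quotient.mk (Ideal.span {c}) b = -(g : Polynomial F ⧸ Ideal.span {c}) := by
    rw [hb, map_add, Ideal.Quotient.eq_zero_iff_mem.mpr
      (Ideal.subset_span (Set.mem_singleton c)), zero_add, hb₀mk]
  have hbmk_ne : Ideal.Quotient.mk (Ideal.span {c}) b ≠ 0 := by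
    rw [hbmk, neg_ne_zero]
    exact g.ne_zero
  have hbc : IsCoprime b c := by
    refine ((hcirr.coprime_iff_not_dvd).mpr ?_).symm
    intro hdvd
    exact hbmk_ne (Ideal.Quotient.eq_zero_iff_mem.mpr (Ideal.mem_span_singleton.mpr hdvd))
  refine ⟨1, b, c, isCoprime_one_left, isCoprime_one_left, hbc, hcirr, hcdeg, ?_, hbdeg, ?_, ?_⟩
  · rw [degree_one]
    exact_mod_cast WithBot.coe_le_coe.mpr (by omega : 0 ≤ D) |>.trans_eq rfl
  · refine ⟨1, 2, by decide, ?_, ?_⟩ <;>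
      simp only [Matrix.cons_val_one, Matrix.head_cons, Matrix.cons_val_two, Matrix.tail_cons, Matrix.cons_val_zero,
        degree_one, hbdeg, hcdegD] <;>
      · rw [max_self]
        rw [max_eq_right]
        exact_mod_cast Nat.zero_le D
  · refine ⟨g⁻¹, ?_, ?_⟩
    · rw [hbmk]
      push_cast
      rw [map_neg, map_one]
      field_simp
    · rw [← Subgroup.zpowers_inv, inv_inv]
      exact (Subgroup.eq_top_iff' _).mpr hg
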